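/- Let φ₀, φ₁, φ₂, φ₃ : ℝ → Matrix (Fin n) (Fin n) ℂ be differentiable functions satisfying the system dφ₀/dt = [φ₀,φ₁], dφ₁/dt = [φ₀,φ₂], dφ₂/dt = [φ₀,φ₃], dφ₃/dt = 0 for all t. Then for every z ∈ ℂ the characteristic polynomial of φ(z,t) = φ₀(t) + z·φ₁(t) + z²·φ₂(t) + z³·φ₃(t) is independent of t: for all s, t ∈ ℝ, charpoly(φ(z,s)) = charpoly(φ(z,t)). -/

import Mathlib

open Matrix Polynomial Finset

namespace NahmFlowAux

variable {n : ℕ}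

/-- Jacobi's formula: derivative of the determinant along a matrix path. -/
lemma hasDerivAt_det (M : ℝ → Matrix (Fin n) (Fin n) ℂ)
    (N : Matrix (Fin n) (Fin n) ℂ) (t : ℝ)
    (h : ∀ i j, HasDerivAt (fun s => M s i j) (N i j) t) :
    HasDerivAt (fun s => (M s).det) ((Matrix.adjugate (M t) * N).trace) t := by
  have H : HasDerivAt (fun s => ∑ σ : Equiv.Perm (Fin n),
        ((Equiv.Perm.sign σ : ℤ) : ℂ) * ∏ i, M s (σ i) i)
      (∑ σ : Equiv.Perm (Fin n), ((Equiv.Perm.sign σ : ℤ) : ℂ) *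
        ∑ k, (∏ i ∈ Finset.univ.erase k, M t (σ i) i) • N (σ k) k) t := by
    apply HasDerivAt.fun_sum
    intro σ _
    exact (HasDerivAt.fun_finset_prod (fun i _ => h (σ i) i)).const_mul _
  have e1 : (fun s => (M s).det) = fun s => ∑ σ : Equiv.Perm (Fin n),
      ((Equiv.Perm.sign σ : ℤ) : ℂ) * ∏ i, M s (σ i) i := by
    funext s; exact Matrix.det_apply' (M s)
  rw [e1]
  convert H using 1
  -- the trace identity
  have key : ∀ k, (Matrix.adjugate (M t) * N) k k
      = ((M t).updateCol k fun r => N r k).det := by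
    intro k
    have : (Matrix.adjugate (M t) * N) k k
        = ((Matrix.adjugate (M t)) *ᵥ fun r => N r k) k := by
      simp [Matrix.mul_apply, Matrix.mulVec, dotProduct]
    rw [this, ← Matrix.cramer_eq_adjugate_mulVec, Matrix.cramer_apply]
  have prodkey : ∀ (σ : Equiv.Perm (Fin n)) (k : Fin n),
      (∏ i, ((M t).updateCol k fun r => N r k) (σ i) i)
        = N (σ k) k * ∏ i ∈ Finset.univ.erase k, M t (σ i) i := by
    intro σ k
    rw [← Finset.mul_prod_erase Finset.univ _ (Finset.mem_univ k)]
    congr 1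
    · exact Matrix.updateCol_self
    · refine Finset.prod_congr rfl fun i hi => ?_
      rw [Matrix.updateCol_apply, if_neg (Finset.ne_of_mem_erase hi)]
  calc (Matrix.adjugate (M t) * N).trace
      = ∑ k, ((M t).updateCol k fun r => N r k).det := by
        unfold Matrix.trace; exact Finset.sum_congr rfl fun k _ => key k
    _ = ∑ k, ∑ σ : Equiv.Perm (Fin n), ((Equiv.Perm.sign σ : ℤ) : ℂ) *
          (N (σ k) k * ∏ i ∈ Finset.univ.erase k, M t (σ i) i) := by
        refine Finset.sum_congr rfl fun k _ => ?_
        rw [Matrix.det_apply']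
        exact Finset.sum_congr rfl fun σ _ => by rw [prodkey σ k]
    _ = ∑ σ : Equiv.Perm (Fin n), ((Equiv.Perm.sign σ : ℤ) : ℂ) *
          ∑ k, (∏ i ∈ Finset.univ.erase k, M t (σ i) i) • N (σ k) k := by
        rw [Finset.sum_comm]
        refine Finset.sum_congr rfl fun σ _ => ?_
        rw [Finset.mul_sum]
        exact Finset.sum_congr rfl fun k _ => by
          simp [smul_eq_mul]; ring

/-- The Lax-pair identity. -/
lemma lax_identity (z : ℂ) (a b c d : Matrix (Fin n) (Fin n) ℂ) :
    (a + z • b + z ^ 2 • c + z ^ 3 • d) * (b + z • c + z ^ 2 • d)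
      - (b + z • c + z ^ 2 • d) * (a + z • b + z ^ 2 • c + z ^ 3 • d)
    = (a * b - b * a) + z • (a * c - c * a) + z ^ 2 • (a * d - d * a) := by
  simp only [mul_add, add_mul, smul_mul_assoc, mul_smul_comm, smul_smul,
    smul_sub, sub_eq_add_neg, neg_add]
  module

end NahmFlowAux

/-- Along the flow `dφ₀/dt = [φ₀,φ₁]`, `dφ₁/dt = [φ₀,φ₂]`, `dφ₂/dt = [φ₀,φ₃]`,
`dφ₃/dt = 0`, the characteristic polynomial of
`φ(z,t) = φ₀ + z φ₁ + z² φ₂ + z³ φ₃` is independent of `t`. -/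
theorem nahm_flow_degree_charpoly_conserved {n : ℕ}
    (φ₀ φ₁ φ₂ φ₃ : ℝ → Matrix (Fin n) (Fin n) ℂ)
    (hφ₀ : ∀ i j, Differentiable ℝ fun t => φ₀ t i j)
    (hφ₁ : ∀ i j, Differentiable ℝ fun t => φ₁ t i j)
    (hφ₂ : ∀ i j, Differentiable ℝ fun t => φ₂ t i j)
    (hφ₃ : ∀ i j, Differentiable ℝ fun t => φ₃ t i j)
    (h0 : ∀ t i j, deriv (fun s => φ₀ s i j) t
        = (φ₀ t * φ₁ t - φ₁ t * φ₀ t) i j)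
    (h1 : ∀ t i j, deriv (fun s => φ₁ s i j) t
        = (φ₀ t * φ₂ t - φ₂ t * φ₀ t) i j)
    (h2 : ∀ t i j, deriv (fun s => φ₂ s i j) t
        = (φ₀ t * φ₃ t - φ₃ t * φ₀ t) i j)
    (h3 : ∀ t i j, deriv (fun s => φ₃ s i j) t = 0) :
    ∀ z : ℂ, ∀ s t : ℝ,
      (φ₀ s + z • φ₁ s + z ^ 2 • φ₂ s + z ^ 3 • φ₃ s).charpoly
        = (φ₀ t + z • φ₁ t + z ^ 2 • φ₂ t + z ^ 3 • φ₃ t).charpoly := by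
  intro z s t
  set ψ : ℝ → Matrix (Fin n) (Fin n) ℂ :=
    fun u => φ₀ u + z • φ₁ u + z ^ 2 • φ₂ u + z ^ 3 • φ₃ u with hψ
  set A : ℝ → Matrix (Fin n) (Fin n) ℂ :=
    fun u => φ₁ u + z • φ₂ u + z ^ 2 • φ₃ u with hA
  -- entrywise derivative of ψ
  have hψd : ∀ (u : ℝ) (i j : Fin n), HasDerivAt (fun v => ψ v i j)
      ((ψ u * A u - A u * ψ u) i j) u := by
    intro u i j
    have d0 : HasDerivAt (fun v => φ₀ v i j) ((φ₀ u * φ₁ u - φ₁ u * φ₀ u) i j) u := by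
      rw [← h0 u i j]; exact ((hφ₀ i j) u).hasDerivAt
    have d1 : HasDerivAt (fun v => φ₁ v i j) ((φ₀ u * φ₂ u - φ₂ u * φ₀ u) i j) u := by
      rw [← h1 u i j]; exact ((hφ₁ i j) u).hasDerivAt
    have d2 : HasDerivAt (fun v => φ₂ v i j) ((φ₀ u * φ₃ u - φ₃ u * φ₀ u) i j) u := by
      rw [← h2 u i j]; exact ((hφ₂ i j) u).hasDerivAt
    have d3 : HasDerivAt (fun v => φ₃ v i j) 0 u := by
      rw [← h3 u i j]; exact ((hφ₃ i j) u).hasDerivAt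
    have comb := ((d0.add (d1.const_mul z)).add (d2.const_mul (z ^ 2))).add
      (d3.const_mul (z ^ 3))
    have e2 : ψ u * A u - A u * ψ u
        = (φ₀ u * φ₁ u - φ₁ u * φ₀ u) + z • (φ₀ u * φ₂ u - φ₂ u * φ₀ u)
          + z ^ 2 • (φ₀ u * φ₃ u - φ₃ u * φ₀ u) :=
      NahmFlowAux.lax_identity z (φ₀ u) (φ₁ u) (φ₂ u) (φ₃ u)
    rw [e2]
    have hval : (φ₀ u * φ₁ u - φ₁ u * φ₀ u + z • (φ₀ u * φ₂ u - φ₂ u * φ₀ u)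
        + z ^ 2 • (φ₀ u * φ₃ u - φ₃ u * φ₀ u)) i j
        = (φ₀ u * φ₁ u - φ₁ u * φ₀ u) i j + z * (φ₀ u * φ₂ u - φ₂ u * φ₀ u) i j
          + z ^ 2 * (φ₀ u * φ₃ u - φ₃ u * φ₀ u) i j + z ^ 3 * 0 := by
      simp [Matrix.add_apply, Matrix.smul_apply, smul_eq_mul]
    rw [hval]
    exact comb
  -- determinant of x•1 - ψ is conserved
  have key : ∀ (x : ℂ) (u v : ℝ),
      (x • (1 : Matrix (Fin n) (Fin n) ℂ) - ψ u).det
        = (x • (1 : Matrix (Fin n) (Fin n) ℂ) - ψ v).det := by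
    intro x
    set B : ℝ → Matrix (Fin n) (Fin n) ℂ :=
      fun u => x • (1 : Matrix (Fin n) (Fin n) ℂ) - ψ u with hB
    have hBd : ∀ u : ℝ, HasDerivAt (fun v => (B v).det) 0 u := by
      intro u
      have hent : ∀ i j, HasDerivAt (fun v => B v i j)
          ((B u * A u - A u * B u) i j) u := by
        intro i j
        have : B u * A u - A u * B u = A u * ψ u - ψ u * A u := by
          simp only [hB, sub_mul, mul_sub, Matrix.smul_mul, Matrix.mul_smul,
            one_mul, mul_one]
          abel
        rw [this]
        have := (hasDerivAt_const u ((x • (1 : Matrix (Fin n) (Fin n) ℂ)) i j)).fun_sub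
          (hψd u i j)
        simpa [hB, Matrix.sub_apply] using this
      have H := NahmFlowAux.hasDerivAt_det B (B u * A u - A u * B u) u hent
      have htr : (Matrix.adjugate (B u) * (B u * A u - A u * B u)).trace = 0 := by
        rw [mul_sub, Matrix.trace_sub]
        have t1 : (Matrix.adjugate (B u) * (B u * A u)).trace
            = (B u).det * (A u).trace := by
          rw [← mul_assoc, Matrix.adjugate_mul]
          simp [Matrix.smul_mul]
        have t2 : (Matrix.adjugate (B u) * (A u * B u)).trace
            = (B u).det * (A u).trace := by
          rw [← mul_assoc, Matrix.trace_mul_comm, ← mul_assoc, Matrix.mul_adjugate]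
          simp [Matrix.smul_mul]
        rw [t1, t2, sub_self]
      rwa [htr] at H
    have hdiff : Differentiable ℝ fun v => (B v).det :=
      fun u => (hBd u).differentiableAt
    exact fun u v => is_const_of_deriv_eq_zero hdiff (fun u => (hBd u).deriv) u v
  -- conclude for characteristic polynomials
  have e : ∀ u : ℝ, ∀ x : ℂ, Polynomial.eval x (ψ u).charpoly
      = (x • (1 : Matrix (Fin n) (Fin n) ℂ) - ψ u).det := by
    intro u x
    rw [Matrix.charpoly, eval_det, Matrix.matPolyEquiv_charmatrix]
    congr 1
    simp [Matrix.scalar_apply, Matrix.smul_one_eq_diagonal]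
  refine Polynomial.funext fun x => ?_
  rw [e s x, e t x]
  exact key x s t
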